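/- Let A ∈ ℝ^{m×n} have rows a_1,…,a_m and let ε > 0. Suppose that for every h ∈ ℝ^n, (1−ε)·√(2/π)·‖h‖ ≤ (1/m)·Σ_{i=1}^m |⟨a_i,h⟩| ≤ (1+ε)·√(2/π)·‖h‖. Then for all x, y ∈ ℝ^n with ‖x − y‖ ≤ ‖x + y‖ ≤ 10·‖x − y‖, (1/m)·Σ_{i=1}^m | |⟨a_i,x⟩| − |⟨a_i,y⟩| | ≥ √(2/π)·(2 − √2 − (√2 + 20)·ε)·‖x − y‖. -/

import Mathlib

set_option maxHeartbeats 1000000 in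
theorem stmt_14 (m n : ℕ) (A : Fin m → Fin n → ℝ) (ε : ℝ) (hε : 0 < ε)
    (hconc : ∀ h : EuclideanSpace ℝ (Fin n),
      (1 - ε) * Real.sqrt (2 / Real.pi) * ‖h‖ ≤ (1 / m) * ∑ i, |∑ j, A i j * h j| ∧
      (1 / m) * ∑ i, |∑ j, A i j * h j| ≤ (1 + ε) * Real.sqrt (2 / Real.pi) * ‖h‖) :
    ∀ x y : EuclideanSpace ℝ (Fin n),
      ‖x - y‖ ≤ ‖x + y‖ → ‖x + y‖ ≤ 10 * ‖x - y‖ →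
      (1 / m) * ∑ i, |abs (∑ j, A i j * x j) - abs (∑ j, A i j * y j)| ≥
        Real.sqrt (2 / Real.pi) * (2 - Real.sqrt 2 - (Real.sqrt 2 + 20) * ε) * ‖x - y‖ := by
  intro x y hab h10
  set c := Real.sqrt (2 / Real.pi) with hc
  set s2 := Real.sqrt 2 with hs2def
  have hc0 : 0 ≤ c := Real.sqrt_nonneg _
  have hs2sq : s2 ^ 2 = 2 := Real.sq_sqrt (by norm_num)
  have hs21 : (1:ℝ) ≤ s2 := by
    nlinarith [Real.sqrt_nonneg (2:ℝ)]
  -- pointwise identity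
  have key : ∀ p q : ℝ, |p| + |q| + |(|p| - |q|)| = |p + q| + |p - q| := by
    intro p q
    rcases abs_cases p with ⟨e1, f1⟩ | ⟨e1, f1⟩ <;>
    rcases abs_cases q with ⟨e2, f2⟩ | ⟨e2, f2⟩ <;>
    rcases abs_cases (p + q) with ⟨e3, f3⟩ | ⟨e3, f3⟩ <;>
    rcases abs_cases (p - q) with ⟨e4, f4⟩ | ⟨e4, f4⟩ <;>
    rcases abs_cases (|p| - |q|) with ⟨e5, f5⟩ | ⟨e5, f5⟩ <;>
    rw [e1, e2, e3, e4] at * <;> linarith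
  have hadd : ∀ i, (∑ j, A i j * (x + y) j) = (∑ j, A i j * x j) + ∑ j, A i j * y j := by
    intro i
    rw [← Finset.sum_add_distrib]
    apply Finset.sum_congr rfl
    intro j _
    have : (x + y) j = x j + y j := rfl
    rw [this]; ring
  have hsub : ∀ i, (∑ j, A i j * (x - y) j) = (∑ j, A i j * x j) - ∑ j, A i j * y j := by
    intro i
    rw [← Finset.sum_sub_distrib]
    apply Finset.sum_congr rfl
    intro j _
    have : (x - y) j = x j - y j := rfl
    rw [this]; ring
  set X := ∑ i, |∑ j, A i j * x j| with hX
  set Y := ∑ i, |∑ j, A i j * y j| with hY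
  set V := ∑ i, |∑ j, A i j * (x + y) j| with hV
  set U := ∑ i, |∑ j, A i j * (x - y) j| with hU
  set T := ∑ i, |abs (∑ j, A i j * x j) - abs (∑ j, A i j * y j)| with hT
  have hsum : X + Y + T = V + U := by
    rw [hX, hY, hT, hV, hU, ← Finset.sum_add_distrib, ← Finset.sum_add_distrib,
      ← Finset.sum_add_distrib]
    apply Finset.sum_congr rfl
    intro i _
    rw [hadd i, hsub i]
    exact key _ _
  set M := (1:ℝ) / m with hM
  have hTeq : M * T = M * V + M * U - M * X - M * Y := by
    have : T = V + U - X - Y := by linarith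
    rw [this]; ring
  -- concentration bounds
  have hv := (hconc (x + y)).1
  have hu := (hconc (x - y)).1
  have hx := (hconc x).2
  have hy := (hconc y).2
  -- norm facts
  set a := ‖x - y‖ with ha
  set b := ‖x + y‖ with hb
  have ha0 : 0 ≤ a := norm_nonneg _
  have hb0 : 0 ≤ b := norm_nonneg _
  have hX0 : 0 ≤ ‖x‖ := norm_nonneg _
  have hY0 : 0 ≤ ‖y‖ := norm_nonneg _
  have hpar : b * b + a * a = 2 * (‖x‖ * ‖x‖ + ‖y‖ * ‖y‖) :=
    by have h := parallelogram_law_with_norm ℝ x y; simp only [sq] at h; exact h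
  have hS2 : (‖x‖ + ‖y‖) ^ 2 ≤ a ^ 2 + b ^ 2 := by
    nlinarith [sq_nonneg (‖x‖ - ‖y‖)]
  -- key bound: ‖x‖ + ‖y‖ ≤ b + (s2 - 1) * a
  have hAkey : ‖x‖ + ‖y‖ ≤ b + (s2 - 1) * a := by
    have hP0 : 0 ≤ b + (s2 - 1) * a := by nlinarith
    have h1 : (‖x‖ + ‖y‖) ^ 2 ≤ (b + (s2 - 1) * a) ^ 2 := by
      nlinarith [mul_nonneg (mul_nonneg ha0 (sub_nonneg.2 hab)) (sub_nonneg.2 hs21)]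
    have h2 := Real.sqrt_le_sqrt h1
    rwa [Real.sqrt_sq (by positivity), Real.sqrt_sq hP0] at h2
  -- inner inequality
  have hinner : (2 - s2 - (s2 + 20) * ε) * a ≤ (1 - ε) * (b + a) - (1 + ε) * (‖x‖ + ‖y‖) := by
    have hB : (a + b) + (‖x‖ + ‖y‖) ≤ (20 + s2) * a := by linarith
    have hA : (2 - s2) * a ≤ (a + b) - (‖x‖ + ‖y‖) := by linarith
    nlinarith [mul_le_mul_of_nonneg_left hB (le_of_lt hε)]
  have hmul := mul_le_mul_of_nonneg_left hinner hc0
  have e1 : c * ((1 - ε) * (b + a) - (1 + ε) * (‖x‖ + ‖y‖)) =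
      (1 - ε) * c * b + (1 - ε) * c * a - (1 + ε) * c * ‖x‖ - (1 + ε) * c * ‖y‖ := by ring
  have e2 : c * ((2 - s2 - (s2 + 20) * ε) * a) = c * (2 - s2 - (s2 + 20) * ε) * a := by ring
  rw [ge_iff_le]
  rw [e1] at hmul
  linarith
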